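/- arXiv:2504.03533 — 3 statements merged into one kernel-verified Lean document; each statement's English description precedes it below -/
import Mathlib

section
/- Let (X,T) be a topological dynamical system, let μ be an ergodic T-invariant Borel probability measure on X, and let n ∈ ℤ. If for μ-almost every x ∈ X the points x and T^n x are asymptotic (that is, dist(T^{-m}x, T^{-m}(T^n x)) → 0 as m → ∞), then T^n x = x for μ-almost every x ∈ X. -/
open Filter Topology MeasureTheory

namespace AsympSOE

/-! ### Subshift basics -/

/-- Shift of a bi-infinite sequence by `n` (the `n`-th power of the left shift `S`). -/
def SShift {A : Type*} (n : ℤ) (x : ℤ → A) : ℤ → A := fun i => x (i + n)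

/-- Two bi-infinite sequences are (left) asymptotic: they agree on a left half-line. -/
def SAsymp {A : Type*} (x y : ℤ → A) : Prop := ∃ ℓ : ℤ, ∀ i < ℓ, x i = y i

/-- `y` belongs to the shift-orbit of `x`. -/
def SSameOrbit {A : Type*} (x y : ℤ → A) : Prop := ∃ n : ℤ, SShift n x = y

/-- The shift-orbits of `x` and `y` are asymptotic. -/
def SOrbAsymp {A : Type*} (x y : ℤ → A) : Prop :=
  ∃ n n' : ℤ, SAsymp (SShift n x) (SShift n' y)

/-- `C` is an asymptotic component of the subshift `X`: it is the `SOrbAsymp`-class of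
some `x ∈ X` and contains at least two distinct orbits. -/
def SIsAsymComponent {A : Type*} (X : Set (ℤ → A)) (C : Set (ℤ → A)) : Prop :=
  ∃ x ∈ X, C = {y ∈ X | SOrbAsymp x y} ∧ ∃ y ∈ X, SOrbAsymp x y ∧ ¬ SSameOrbit x y

/-- A subshift: a nonempty closed shift-invariant set of bi-infinite sequences. -/
def IsSubshift {A : Type*} [TopologicalSpace A] (X : Set (ℤ → A)) : Prop :=
  X.Nonempty ∧ IsClosed X ∧ (∀ x ∈ X, SShift 1 x ∈ X) ∧ (∀ x ∈ X, SShift (-1) x ∈ X)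

/-- A minimal subshift: every orbit is dense. -/
def IsMinimalSubshift {A : Type*} [TopologicalSpace A] (X : Set (ℤ → A)) : Prop :=
  IsSubshift X ∧ ∀ x ∈ X, ∀ y ∈ X, y ∈ closure {z | SSameOrbit x z}

/-- The words of length `n` appearing in points of `X`. -/
def langOf {A : Type*} (X : Set (ℤ → A)) (n : ℕ) : Set (List A) :=
  {w | ∃ x ∈ X, ∃ a : ℤ, (List.range n).map (fun t => x (a + t)) = w}

/-- The complexity function of a subshift. -/
noncomputable def complexityOf {A : Type*} (X : Set (ℤ → A)) (n : ℕ) : ℕ :=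
  (langOf X n).ncard

/-- A Toeplitz sequence. -/
def IsToeplitzSeq {A : Type*} (x : ℤ → A) : Prop :=
  ∀ n : ℤ, ∃ p : ℕ, 0 < p ∧ ∀ k : ℤ, x (n + k * p) = x n

/-- A Toeplitz subshift: the shift-orbit closure of a Toeplitz sequence. -/
def IsToeplitzSubshift {A : Type*} [TopologicalSpace A] (X : Set (ℤ → A)) : Prop :=
  ∃ x : ℤ → A, IsToeplitzSeq x ∧ X = closure {z | SSameOrbit x z}

/-! ### General topological dynamical systems -/

/-- The (full) orbit of `x` under the invertible map `T`. -/
def orbitEq {X : Type*} (T : Equiv.Perm X) (x : X) : Set X := {y | ∃ n : ℤ, (T ^ n) x = y}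

/-- `x` and `y` are (left) asymptotic for `T`: `dist (T⁻ⁿ x) (T⁻ⁿ y) → 0` as `n → ∞`. -/
def MAsymp {X : Type*} [MetricSpace X] (T : Equiv.Perm X) (x y : X) : Prop :=
  Tendsto (fun n : ℕ => dist ((T ^ (-(n : ℤ))) x) ((T ^ (-(n : ℤ))) y)) atTop (𝓝 0)

/-- The orbits of `x` and `y` are asymptotic. -/
def MOrbAsymp {X : Type*} [MetricSpace X] (T : Equiv.Perm X) (x y : X) : Prop :=
  ∃ n n' : ℤ, MAsymp T ((T ^ n) x) ((T ^ n') y)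

/-- `C` is an asymptotic component of the system `(X, T)`: the `MOrbAsymp`-class of some
point `x`, containing at least two distinct orbits. -/
def MIsAsymComponent {X : Type*} [MetricSpace X] (T : Equiv.Perm X) (C : Set X) : Prop :=
  ∃ x, C = {y | MOrbAsymp T x y} ∧ ∃ y, MOrbAsymp T x y ∧ y ∉ orbitEq T x

/-- A minimal Cantor system: the compact metric space `X` is a Cantor space (nonempty,
totally disconnected, without isolated points) and every `T`-orbit is dense. -/
def IsMinimalCantor {X : Type*} [MetricSpace X] (T : X ≃ₜ X) : Prop :=
  CompactSpace X ∧ TotallyDisconnectedSpace X ∧ Nonempty X ∧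
    (∀ x : X, Filter.NeBot (𝓝[≠] x)) ∧ ∀ x : X, Dense (orbitEq T.toEquiv x)

/-- Strong orbit equivalence of the systems `(X, T)` and `(Y, S)`: an orbit equivalence
whose two orbit cocycles each have at most one point of discontinuity. -/
def IsSOE {X Y : Type*} [TopologicalSpace X] [TopologicalSpace Y]
    (T : X ≃ₜ X) (S : Y ≃ₜ Y) : Prop :=
  ∃ φ : X ≃ₜ Y,
    (∀ x : X, φ '' orbitEq T.toEquiv x = orbitEq S.toEquiv (φ x)) ∧
    ∃ α β : X → ℤ,
      (∀ x, φ (T x) = (S.toEquiv ^ α x) (φ x)) ∧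
      (∀ x, φ ((T.toEquiv ^ β x) x) = S (φ x)) ∧
      {x | ¬ContinuousAt α x}.Subsingleton ∧
      {x | ¬ContinuousAt β x}.Subsingleton

/-- The automorphism group of a system `(Y, S)`, as a subgroup of the permutation group:
the bi-continuous bijections commuting with `S`. -/
def autGroup {Y : Type*} [TopologicalSpace Y] (S : Y ≃ₜ Y) : Subgroup (Equiv.Perm Y) where
  carrier := {φ | Continuous φ ∧ Continuous φ.symm ∧ ∀ y, φ (S y) = S (φ y)}
  one_mem' := ⟨continuous_id, continuous_id, fun _ => rfl⟩
  mul_mem' := by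
    rintro a b ⟨ha1, ha2, ha3⟩ ⟨hb1, hb2, hb3⟩
    refine ⟨ha1.comp hb1, hb2.comp ha2, fun y => ?_⟩
    simp only [Equiv.Perm.mul_apply, hb3, ha3]
  inv_mem' := by
    rintro a ⟨ha1, ha2, ha3⟩
    refine ⟨by simpa using ha2, by rw [Equiv.Perm.inv_def, Equiv.symm_symm]; exact ha1, fun y => ?_⟩
    have h : a (S (a⁻¹ y)) = S y := by
      rw [ha3 (a⁻¹ y), Equiv.Perm.inv_def, Equiv.apply_symm_apply]
    calc a⁻¹ (S y) = a⁻¹ (a (S (a⁻¹ y))) := by rw [h]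
    _ = S (a⁻¹ y) := by rw [Equiv.Perm.inv_def, Equiv.symm_apply_apply]

/-- If `μ` is an ergodic invariant measure and `x ∼ T^n x` almost surely,
then `T^n x = x` almost surely. -/
theorem ae_fixed_of_ae_asymptotic_iterate
    {X : Type*} [MetricSpace X] [CompactSpace X] [MeasurableSpace X] [BorelSpace X]
    (T : X ≃ₜ X) (μ : Measure X) [IsProbabilityMeasure μ]
    (hErg : Ergodic (T : X → X) μ) (n : ℤ)
    (hAs : ∀ᵐ x ∂μ, MAsymp T.toEquiv x ((T.toEquiv ^ n) x)) :
    ∀ᵐ x ∂μ, (T.toEquiv ^ n) x = x := by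
  simp only [MAsymp] at hAs
  have hiter : ∀ (m : ℕ) (x : X), (T.toEquiv ^ (-(m : ℤ))) x = (T.symm : X → X)^[m] x := by
    intro m
    induction m with
    | zero => intro x; simp
    | succ k ih =>
      intro x
      have h1 : (-(↑(k+1) : ℤ)) = (-1) + (-(k:ℤ)) := by push_cast; ring
      rw [h1, zpow_add, Equiv.Perm.mul_apply, ih, Function.iterate_succ', zpow_neg_one]
      rfl
  have hcont : ∀ m : ℤ, Continuous fun x => (T.toEquiv ^ m) x := by
    intro m
    induction m using Int.induction_on with
    | zero => simpa using continuous_id'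
    | succ k ih =>
      have h : (fun x => (T.toEquiv ^ ((k:ℤ)+1)) x) = (fun x => T ((T.toEquiv ^ (k:ℤ)) x)) := by
        funext x
        have : ((k:ℤ)+1) = 1 + k := by ring
        rw [this, zpow_add, Equiv.Perm.mul_apply, zpow_one]; rfl
      rw [h]; exact T.continuous.comp ih
    | pred k ih =>
      have h : (fun x => (T.toEquiv ^ (-(k:ℤ)-1)) x) = (fun x => T.symm ((T.toEquiv ^ (-(k:ℤ))) x)) := by
        funext x
        have : (-(k:ℤ)-1) = (-1) + (-(k:ℤ)) := by ring
        rw [this, zpow_add, Equiv.Perm.mul_apply, zpow_neg_one]; rfl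
      rw [h]; exact T.symm.continuous.comp ih
  set g : X → ℝ := fun x => dist x ((T.toEquiv ^ n) x) with hg
  have hgcont : Continuous g := continuous_id.dist (hcont n)
  -- commute: T^{-m} (T^n x) = T^n (T^{-m} x)
  have hcomm : ∀ (m : ℕ) (x : X), (T.toEquiv ^ (-(m:ℤ))) ((T.toEquiv ^ n) x)
      = (T.toEquiv ^ n) ((T.toEquiv ^ (-(m:ℤ))) x) := by
    intro m x
    rw [← Equiv.Perm.mul_apply, ← Equiv.Perm.mul_apply, ← zpow_add, ← zpow_add, add_comm]
  have hAs' : ∀ᵐ x ∂μ, Tendsto (fun m : ℕ => g ((T.symm : X → X)^[m] x)) atTop (𝓝 0) := by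
    filter_upwards [hAs] with x hx
    convert hx using 2 with m
    rw [hg]; simp only [hcomm, hiter]
  -- T.symm is measure-preserving, hence conservative
  have hmpT : MeasurePreserving (T : X → X) μ μ := hErg.toMeasurePreserving
  have hmp : MeasurePreserving (T.symm : X → X) μ μ :=
    MeasurePreserving.symm T.toMeasurableEquiv hmpT
  have hcons : Conservative (T.symm : X → X) μ := hmp.conservative
  have key : ∀ k : ℕ, ∀ᵐ x ∂μ, g x < 1 / (k + 1) := by
    intro k
    set s : Set X := {x | 1 / ((k:ℝ) + 1) ≤ g x} with hs
    have hsm : MeasurableSet s := measurableSet_le measurable_const hgcont.measurable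
    filter_upwards [hcons.ae_mem_imp_frequently_image_mem hsm.nullMeasurableSet, hAs'] with x hrec hx
    by_contra hlt
    push_neg at hlt
    have hxs : x ∈ s := hlt
    have hfreq := hrec hxs
    have hev : ∀ᶠ m in atTop, g ((T.symm : X → X)^[m] x) < 1 / (k+1) := by
      have := hx.eventually_lt_const (by positivity : (0:ℝ) < 1 / (k+1))
      exact this
    obtain ⟨m, hm1, hm2⟩ := (hfreq.and_eventually hev).exists
    exact absurd hm1 (not_le.mpr hm2)
  have : ∀ᵐ x ∂μ, ∀ k : ℕ, g x < 1 / (k + 1) := ae_all_iff.mpr key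
  filter_upwards [this] with x hx
  have hg0 : g x ≤ 0 := by
    by_contra h
    push_neg at h
    obtain ⟨k, hk⟩ := exists_nat_one_div_lt h
    exact absurd (hx k) (not_lt.mpr hk.le)
  have : g x = 0 := le_antisymm hg0 dist_nonneg
  exact (dist_eq_zero.mp this).symm


end AsympSOE
end

section
/- Let k ≥ 1, let τ = (τ_n : V_{n+1}* → V_n*)_{n≥0} be a directive sequence of morphisms satisfying Property (P_k) with V_n = {v_{1,n},…,v_{m_n,n}} for n ≥ 1, and fix n ≥ 1. If the letter v_{i,n} ∈ V_n is a signal for some x ∈ X_τ^{(n)}, then 1 ≤ i ≤ k. Moreover, if x, y ∈ X_τ^{(n)} form a nontrivial asymptotic pair with J(x,y) = (v_{i,n}, ℓ), then {x_ℓ, y_ℓ} = {v_{i,n}, v_{i+1,n}}. -/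
open Filter Topology MeasureTheory

namespace AsympSOE

/-! ### S-adic subshifts and Property (P_k) -/

/-- The word `x_a x_{a+1} … x_{a+len-1}` read in the bi-infinite sequence `x`. -/
def factorWord {A : Type*} (x : ℤ → A) (a : ℤ) (len : ℕ) : List A :=
  (List.range len).map fun t => x (a + t)

/-- `tauIter τ n d a = (τ_n ∘ τ_{n+1} ∘ … ∘ τ_{n+d-1}) (a)`: the image of the letter `a`
of level `n + d` under the composition of the directive sequence down to level `n`.
In particular `tauIter τ 0 n` is `τ_{[0,n)}`. -/
def tauIter (τ : ℕ → ℕ → List ℕ) (n : ℕ) : ℕ → ℕ → List ℕ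
  | 0, a => [a]
  | d + 1, a => (τ (n + d) a).flatMap (tauIter τ n d)

/-- The S-adic subshift generated by the directive sequence `τ` at level `n`
(the level-`n` alphabet consists of the naturals `< m n`). -/
def SAdicLevel (m : ℕ → ℕ) (τ : ℕ → ℕ → List ℕ) (n : ℕ) : Set (ℤ → ℕ) :=
  {x | (∀ i, x i < m n) ∧
    ∀ (a : ℤ) (len : ℕ), ∃ N c, n < N ∧ c < m N ∧
      factorWord x a len <:+: tauIter τ n (N - n) c}

/-- The prescribed prefix `v_1² v_2² … v_{a}² v_{a+1} … v_{k+1}` in `0`-based letters: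
letters `0, …, a-1` doubled, followed by the letters `a, …, k`. -/
def pkPrefix (k a : ℕ) : List ℕ :=
  (List.range a).flatMap (fun j => [j, j]) ++ (List.range (k + 1 - a)).map (fun j => a + j)

/-- Property `(P_k)` for a directive sequence `τ` with alphabet sizes `m`: `τ₀` is a
(non-erasing) hat morphism and, for every `n ≥ 1`, `τ_n` is primitive, has the prescribed
prefixes, ends with the last letter of the level-`n` alphabet, and no image contains the
word (last letter)(first letter).  Level-`n` letters are `0, 1, …, m n - 1`, so the
letter `v_{i,n}` of the paper is `i - 1`. -/
def PropertyPk (k : ℕ) (m : ℕ → ℕ) (τ : ℕ → ℕ → List ℕ) : Prop :=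
  (∀ n, 1 ≤ n → k < m n) ∧
  (∀ n a, a < m (n + 1) → τ n a ≠ [] ∧ ∀ c ∈ τ n a, c < m n) ∧
  (∀ a b, a < m 1 → b < m 1 → a ≠ b → ∀ c, c ∈ τ 0 a → c ∉ τ 0 b) ∧
  (∀ n, 1 ≤ n → ∀ a, a < m (n + 1) → ∀ b, b < m n → b ∈ τ n a) ∧
  (∀ n, 1 ≤ n → ∀ a, a ≤ k → pkPrefix k a <+: τ n a) ∧
  (∀ n, 1 ≤ n → ∀ a, k < a → a < m (n + 1) → (List.replicate (a + 1) 0 ++ [1]) <+: τ n a) ∧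
  (∀ n, 1 ≤ n → ∀ a, a < m (n + 1) →
    ([m n - 1] <:+ τ n a ∧ ¬ ([m n - 1, 0] <:+: τ n a)))

/-- Property `(P_∞)`: as `(P_k)` but with `k` replaced by `n` at level `n`. -/
def PropertyPinf (m : ℕ → ℕ) (τ : ℕ → ℕ → List ℕ) : Prop :=
  (∀ n, 1 ≤ n → n < m n) ∧
  (∀ n a, a < m (n + 1) → τ n a ≠ [] ∧ ∀ c ∈ τ n a, c < m n) ∧
  (∀ a b, a < m 1 → b < m 1 → a ≠ b → ∀ c, c ∈ τ 0 a → c ∉ τ 0 b) ∧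
  (∀ n, 1 ≤ n → ∀ a, a < m (n + 1) → ∀ b, b < m n → b ∈ τ n a) ∧
  (∀ n, 1 ≤ n → ∀ a, a ≤ n → pkPrefix n a <+: τ n a) ∧
  (∀ n, 1 ≤ n → ∀ a, n < a → a < m (n + 1) → (List.replicate (a + 1) 0 ++ [1]) <+: τ n a) ∧
  (∀ n, 1 ≤ n → ∀ a, a < m (n + 1) →
    ([m n - 1] <:+ τ n a ∧ ¬ ([m n - 1, 0] <:+: τ n a)))

/-- The (integer) position in the concatenation `σ(y)` at which the block `σ(y_j)` starts,
the block `σ(y_0)` starting at position `0`. -/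
def cumLen (σ : ℕ → List ℕ) (y : ℤ → ℕ) (j : ℤ) : ℤ :=
  if 0 ≤ j then ((List.range j.toNat).map fun t => ((σ (y t)).length : ℤ)).sum
  else -(((List.range (-j).toNat).map fun t => ((σ (y (j + t))).length : ℤ)).sum)

/-- `x = S^r (σ(y))`, where `σ(y) = … σ(y_{-1}).σ(y_0) σ(y_1) …` is the concatenated image
of the bi-infinite sequence `y` (block `σ(y_0)` starting at coordinate `0`): for every `j`,
the word `σ(y_j)` is read in `x` starting at position `cumLen σ y j - r`. -/
def IsShiftedImage (σ : ℕ → List ℕ) (y : ℤ → ℕ) (r : ℤ) (x : ℤ → ℕ) : Prop :=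
  ∀ j : ℤ, factorWord x (cumLen σ y j - r) (σ (y j)).length = σ (y j)


/-! ### Auxiliary material for Statement 6 -/

section Aux6

lemma aux_head?_eq_getD (l : List ℕ) (h : l ≠ []) : l.head? = some (l.getD 0 0) := by
  rcases l with _ | ⟨c, l⟩
  · simp at h
  · simp

lemma aux_prefix_getD {l₁ l₂ : List ℕ} (h : l₁ <+: l₂) {i : ℕ} (hi : i < l₁.length) :
    l₂.getD i 0 = l₁.getD i 0 := by
  rw [List.getD_eq_getElem _ _ (lt_of_lt_of_le hi h.length_le),
    List.getD_eq_getElem _ _ hi, h.getElem hi]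

lemma aux_getD_left (s u : List ℕ) (i : ℕ) (hi : i < s.length) :
    (s ++ u).getD i 0 = s.getD i 0 :=
  List.getD_append s u 0 i hi

lemma aux_M0_at (s t : List ℕ) (M : ℕ) :
    (s ++ ([M, 0] ++ t)).getD s.length 0 = M ∧
      (s ++ ([M, 0] ++ t)).getD (s.length + 1) 0 = 0 := by
  constructor
  · rw [List.getD_append_right _ _ _ _ (le_refl _)]
    simp
  · rw [List.getD_append_right _ _ _ _ (by omega)]
    have : s.length + 1 - s.length = 1 := by omega
    rw [this]
    simp

/-- The letter formula for the prescribed prefixes. -/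
def auxPget (k a i : ℕ) : ℕ :=
  if a ≤ k then (if i < 2*a then i / 2 else a + (i - 2*a))
  else (if i < a+1 then 0 else 1)

/-- The length of the prescribed prefixes. -/
def auxPlen (k a : ℕ) : ℕ := if a ≤ k then 2*a + (k+1-a) else a + 2

/-- The prescribed prefix of `τ_n(a)` under Property `(P_k)`. -/
def auxPk (k a : ℕ) : List ℕ :=
  if a ≤ k then pkPrefix k a else List.replicate (a+1) 0 ++ [1]

lemma aux_pk_flat (a : ℕ) :
    (List.range a).flatMap (fun j => [j, j]) = (List.range (2*a)).map (fun i => i / 2) := by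
  induction a with
  | zero => rfl
  | succ a ih =>
    rw [List.range_succ, List.flatMap_append, ih]
    have h : 2 * (a+1) = (2*a) + 1 + 1 := by ring
    rw [h, List.range_succ, List.range_succ]
    simp only [List.map_append, List.append_assoc, List.flatMap_cons, List.flatMap_nil,
      List.map_cons, List.map_nil]
    have h1 : 2 * a / 2 = a := by omega
    have h2 : (2 * a + 1) / 2 = a := by omega
    rw [h1, h2]
    simp

lemma aux_pkPrefix_length (k a : ℕ) : (pkPrefix k a).length = 2*a + (k + 1 - a) := by
  simp [pkPrefix, aux_pk_flat]

lemma aux_pkPrefix_getElem (k a i : ℕ) (h : i < 2*a + (k+1-a)) :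
    (pkPrefix k a)[i]'(by rw [aux_pkPrefix_length]; exact h) =
      if i < 2*a then i / 2 else a + (i - 2*a) := by
  unfold pkPrefix
  by_cases hi : i < 2*a
  · rw [List.getElem_append_left (by simp [aux_pk_flat, hi])]
    simp [aux_pk_flat, hi]
  · rw [List.getElem_append_right (by simp [aux_pk_flat]; omega)]
    have hlen : ((List.range a).flatMap fun j => [j, j]).length = 2*a := by simp [aux_pk_flat]
    simp only [hlen, List.getElem_map, List.getElem_range, hi, if_false]

lemma auxPk_length (k a : ℕ) : (auxPk k a).length = auxPlen k a := by
  unfold auxPk auxPlen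
  split
  · exact aux_pkPrefix_length k a
  · simp

lemma auxPk_getElem (k a i : ℕ) (h : i < auxPlen k a) :
    (auxPk k a)[i]'(by rw [auxPk_length]; exact h) = auxPget k a i := by
  unfold auxPk auxPget
  split
  · next ha => exact aux_pkPrefix_getElem k a i (by unfold auxPlen at h; simpa [ha] using h)
  · next ha =>
    unfold auxPlen at h
    simp only [ha, if_false] at h ⊢
    by_cases hi : i < a + 1
    · rw [List.getElem_append_left (by simpa using hi)]
      simp [hi]
    · rw [List.getElem_append_right (by simpa using hi)]
      simp [hi]

lemma auxPk_getD (k a i : ℕ) (h : i < auxPlen k a) :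
    (auxPk k a).getD i 0 = auxPget k a i := by
  rw [List.getD_eq_getElem _ _ (by rw [auxPk_length]; exact h)]
  exact auxPk_getElem k a i h

lemma auxPlen_pos (k a : ℕ) : 0 < auxPlen k a := by
  unfold auxPlen; split <;> omega

lemma auxPget_zero (k a : ℕ) : auxPget k a 0 = 0 := by
  unfold auxPget; split <;> split <;> omega

lemma aux_div_lt (k a b : ℕ) (hk : 1 ≤ k) (hab : a < b) :
    ∃ j, 1 ≤ j ∧ j < auxPlen k a ∧ j < auxPlen k b ∧
      (∀ i < j, auxPget k a i = auxPget k b i) ∧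
      auxPget k a (j-1) < k ∧ auxPget k a j = auxPget k a (j-1) + 1 ∧
      auxPget k b j = auxPget k a (j-1) := by
  by_cases hb : b ≤ k
  · refine ⟨2*a+1, by omega, ?_, ?_, ?_, ?_, ?_, ?_⟩ <;>
      first
      | (unfold auxPlen; split_ifs <;> omega)
      | (intro i hi; unfold auxPget; split_ifs <;> omega)
      | (unfold auxPget; split_ifs <;> omega)
  · by_cases ha : a ≤ k
    · rcases Nat.eq_zero_or_pos a with rfl | hpos
      · refine ⟨1, le_refl _, ?_, ?_, ?_, ?_, ?_, ?_⟩ <;>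
          first
          | (unfold auxPlen; split_ifs <;> omega)
          | (intro i hi; unfold auxPget; split_ifs <;> omega)
          | (unfold auxPget; split_ifs <;> omega)
      · refine ⟨2, by omega, ?_, ?_, ?_, ?_, ?_, ?_⟩ <;>
          first
          | (unfold auxPlen; split_ifs <;> omega)
          | (intro i hi; unfold auxPget; split_ifs <;> omega)
          | (unfold auxPget; split_ifs <;> omega)
    · refine ⟨a+1, by omega, ?_, ?_, ?_, ?_, ?_, ?_⟩ <;>
        first
        | (unfold auxPlen; split_ifs <;> omega)
        | (intro i hi; unfold auxPget; split_ifs <;> omega)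
        | (unfold auxPget; split_ifs <;> omega)

lemma aux_div_general (k a b : ℕ) (hk : 1 ≤ k) (hne : a ≠ b) :
    ∃ j, 1 ≤ j ∧ j < auxPlen k a ∧ j < auxPlen k b ∧
      (∀ i < j, auxPget k a i = auxPget k b i) ∧
      auxPget k a (j-1) < k ∧
      ((auxPget k a j = auxPget k a (j-1) ∧ auxPget k b j = auxPget k a (j-1) + 1) ∨
        (auxPget k a j = auxPget k a (j-1) + 1 ∧ auxPget k b j = auxPget k a (j-1))) := by
  rcases lt_or_gt_of_ne hne with h | h
  · obtain ⟨j, h1, h2, h3, h4, h5, h6, h7⟩ := aux_div_lt k a b hk h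
    exact ⟨j, h1, h2, h3, h4, h5, Or.inr ⟨h6, h7⟩⟩
  · obtain ⟨j, h1, h2, h3, h4, h5, h6, h7⟩ := aux_div_lt k b a hk h
    have hagree : auxPget k b (j-1) = auxPget k a (j-1) := h4 (j-1) (by omega)
    exact ⟨j, h1, h3, h2, fun i hi => (h4 i hi).symm, hagree ▸ h5,
      Or.inl ⟨by rw [h7, hagree], by rw [h6, hagree]⟩⟩

section AuxBlocks
variable (σ : ℕ → List ℕ) (S M B : ℕ)
variable (Hne : ∀ b < S, σ b ≠ [])
variable (Hhd : ∀ b < S, (σ b).head? = some 0)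
variable (Hlast : ∀ b < S, (σ b).getLast? = some M)
variable (Hno : ∀ b < S, ¬ [M, 0] <:+: σ b)
variable (Hlen : ∀ b < S, (σ b).length ≤ B)

include Hne Hhd in
lemma aux_flatMap_head (ws : List ℕ) (hws : ∀ b ∈ ws, b < S) (hne : ws.flatMap σ ≠ []) :
    (ws.flatMap σ).head? = some 0 := by
  induction ws with
  | nil => simp at hne
  | cons b ws' ih =>
    rw [List.flatMap_cons]
    rw [List.head?_append_of_ne_nil _ (Hne b (hws b (by simp)))]
    exact Hhd b (hws b (by simp))

include Hne Hhd Hlast Hlen in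
omit Hno in
lemma aux_L1 (ws : List ℕ) (hws : ∀ b ∈ ws, b < S) (w : List ℕ)
    (hinf : w <:+: ws.flatMap σ) (hnoM0 : ¬ [M, 0] <:+: w) : w.length ≤ B := by
  induction ws with
  | nil => simp at hinf; simp [hinf]
  | cons b ws' ih =>
    have hbS : b < S := hws b (by simp)
    obtain ⟨s, t, hst⟩ := hinf
    rw [List.flatMap_cons] at hst
    by_cases h1 : s.length + w.length ≤ (σ b).length
    · have hp1 : s ++ w <+: σ b ++ ws'.flatMap σ := ⟨t, by simp [← hst]⟩
      have hp2 : σ b <+: σ b ++ ws'.flatMap σ := List.prefix_append _ _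
      have hpre : s ++ w <+: σ b :=
        List.prefix_of_prefix_length_le hp1 hp2 (by simpa using h1)
      obtain ⟨r, hr⟩ := hpre
      have hwin : w <:+: σ b := ⟨s, r, by rw [← hr, List.append_assoc]⟩
      calc w.length ≤ (σ b).length := hwin.length_le
        _ ≤ B := Hlen b hbS
    · by_cases h2 : (σ b).length ≤ s.length
      · have hp1 : σ b <+: σ b ++ ws'.flatMap σ := List.prefix_append _ _
        have hp2 : s <+: σ b ++ ws'.flatMap σ := ⟨w ++ t, by rw [← hst]; simp⟩
        obtain ⟨s', rfl⟩ := List.prefix_of_prefix_length_le hp1 hp2 h2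
        apply ih (fun c hc => hws c (by simp [hc]))
        refine ⟨s', t, ?_⟩
        have h := hst
        rw [List.append_assoc, List.append_assoc] at h
        have h' := List.append_cancel_left h
        rw [← List.append_assoc] at h'
        exact h'
      · exfalso
        push_neg at h1 h2
        obtain ⟨i, hi1, hiw, hieq⟩ : ∃ i, 1 ≤ i ∧ i < w.length ∧ s.length + i = (σ b).length :=
          ⟨(σ b).length - s.length, by omega, by omega, by omega⟩
        have hw12 : w = w.take i ++ w.drop i := (List.take_append_drop i w).symm
        set w1 := w.take i with hw1
        set w2 := w.drop i with hw2
        have hsplit : (s ++ w1) ++ (w2 ++ t) = σ b ++ ws'.flatMap σ := by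
          rw [← hst]; nth_rewrite 1 [hw12]; simp
        have hlen1 : (s ++ w1).length = (σ b).length := by
          rw [List.length_append, hw1, List.length_take]; omega
        obtain ⟨hA, hB⟩ := List.append_inj hsplit hlen1
        have hw1ne : w1 ≠ [] := by
          have h : w1.length = i := by rw [hw1, List.length_take]; omega
          intro hcon; rw [hcon] at h; simp at h; omega
        have hw2ne : w2 ≠ [] := by
          have h : w2.length = w.length - i := by rw [hw2, List.length_drop]
          intro hcon; rw [hcon] at h; simp at h; omega
        have hlastw1 : w1.getLast? = some M := by
          have h := Hlast b hbS
          rw [← hA, List.getLast?_append] at h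
          rcases hgl : w1.getLast? with _ | v
          · rw [List.getLast?_eq_none_iff] at hgl; exact absurd hgl hw1ne
          · rw [hgl] at h; simpa using h
        have hhdw2 : w2.head? = some 0 := by
          have hR : ws'.flatMap σ ≠ [] := by
            intro hcon; rw [hcon] at hB; simp at hB; exact hw2ne hB.1
          have h0 : (ws'.flatMap σ).head? = some 0 :=
            aux_flatMap_head σ S Hne Hhd ws' (fun c hc => hws c (by simp [hc])) hR
          rw [← hB, List.head?_append_of_ne_nil _ hw2ne] at h0
          exact h0
        apply hnoM0
        obtain ⟨v1, hv1⟩ : ∃ v1, w1 = v1 ++ [M] := by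
          rcases List.eq_nil_or_concat w1 with h | ⟨v1, c, hc⟩
          · exact absurd h hw1ne
          · refine ⟨v1, ?_⟩
            rw [hc] at hlastw1 ⊢
            simp at hlastw1
            rw [hlastw1, List.concat_eq_append]
        obtain ⟨v2, hv2⟩ : ∃ v2, w2 = 0 :: v2 := by
          rcases w2 with _ | ⟨c, v2⟩
          · exact absurd rfl hw2ne
          · simp at hhdw2; exact ⟨v2, by rw [hhdw2]⟩
        exact ⟨v1, v2, by rw [hw12, hv1, hv2]; simp⟩

include Hne Hhd Hlast in
omit Hno Hlen in
lemma aux_L3 (ws : List ℕ) (hws : ∀ b ∈ ws, b < S) (z : List ℕ) (hz : z ≠ [])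
    (hpre : z <+: ws.flatMap σ)
    (hno : ∀ z1 z2, z = z1 ++ [M, 0] ++ z2 → z2 = []) :
    (∃ b < S, z <+: σ b) ∨ (∃ b < S, z = σ b ++ [0]) := by
  rcases ws with _ | ⟨b, ws'⟩
  · simp at hpre; exact absurd hpre hz
  · have hbS : b < S := hws b (by simp)
    rw [List.flatMap_cons] at hpre
    by_cases h1 : z.length ≤ (σ b).length
    · left
      exact ⟨b, hbS, List.prefix_of_prefix_length_le hpre (List.prefix_append _ _) h1⟩
    · right
      push_neg at h1
      have hpb : σ b <+: z :=
        List.prefix_of_prefix_length_le (List.prefix_append _ _) hpre (le_of_lt h1)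
      obtain ⟨v, rfl⟩ := hpb
      have hvne : v ≠ [] := by
        intro hcon; rw [hcon] at h1; simp at h1
      have hvpre : v <+: ws'.flatMap σ := by
        rw [List.prefix_append_right_inj] at hpre; exact hpre
      have hRne : ws'.flatMap σ ≠ [] := by
        intro hcon; rw [hcon] at hvpre; simp at hvpre; exact hvne hvpre
      have hhdv : v.head? = some 0 := by
        obtain ⟨t, ht⟩ := hvpre
        have h := aux_flatMap_head σ S Hne Hhd ws' (fun c hc => hws c (by simp [hc])) hRne
        rw [← ht, List.head?_append_of_ne_nil _ hvne] at h
        exact h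
      obtain ⟨v', rfl⟩ : ∃ v', v = 0 :: v' := by
        rcases v with _ | ⟨c, v'⟩
        · exact absurd rfl hvne
        · simp at hhdv; exact ⟨v', by rw [hhdv]⟩
      obtain ⟨u, hu⟩ : ∃ u, σ b = u ++ [M] := by
        have hl := Hlast b hbS
        rcases List.eq_nil_or_concat (σ b) with h | ⟨u, c, hc⟩
        · exact absurd h (Hne b hbS)
        · rw [hc] at hl ⊢; simp at hl; rw [hl, List.concat_eq_append]
          exact ⟨u, rfl⟩
      have hv' : v' = [] := by
        apply hno u v'
        rw [hu]; simp
      exact ⟨b, hbS, by rw [hv']⟩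

include Hne Hhd Hlast Hno in
omit Hlen in
lemma aux_L2 (ws : List ℕ) (hws : ∀ b ∈ ws, b < S) (z : List ℕ) (hz : z ≠ [])
    (hz0 : z.head? = some 0)
    (hinf : (M :: z) <:+: ws.flatMap σ)
    (hno : ∀ z1 z2, z = z1 ++ [M, 0] ++ z2 → z2 = []) :
    (∃ b < S, z <+: σ b) ∨ (∃ b < S, z = σ b ++ [0]) := by
  induction ws with
  | nil => simp at hinf
  | cons b ws' ih =>
    have hbS : b < S := hws b (by simp)
    obtain ⟨s, t, hst⟩ := hinf
    rw [List.flatMap_cons] at hst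
    by_cases h2 : (σ b).length ≤ s.length
    · have hp1 : σ b <+: σ b ++ ws'.flatMap σ := List.prefix_append _ _
      have hp2 : s <+: σ b ++ ws'.flatMap σ := ⟨(M :: z) ++ t, by rw [← hst]; simp⟩
      obtain ⟨s', rfl⟩ := List.prefix_of_prefix_length_le hp1 hp2 h2
      apply ih (fun c hc => hws c (by simp [hc]))
      refine ⟨s', t, ?_⟩
      have h := hst
      rw [List.append_assoc, List.append_assoc] at h
      have h' := List.append_cancel_left h
      rw [← List.append_assoc] at h'
      exact h'
    · push_neg at h2
      by_cases h3 : s.length + 1 = (σ b).length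
      · have hsplit : (s ++ [M]) ++ (z ++ t) = σ b ++ ws'.flatMap σ := by
          rw [← hst]; simp
        obtain ⟨hA, hB⟩ := List.append_inj hsplit (by simp [h3])
        exact aux_L3 σ S M Hne Hhd Hlast ws' (fun c hc => hws c (by simp [hc])) z hz
          ⟨t, hB⟩ hno
      · exfalso
        obtain ⟨z', rfl⟩ : ∃ z', z = 0 :: z' := by
          rcases z with _ | ⟨c, z'⟩
          · exact absurd rfl hz
          · simp at hz0; exact ⟨z', by rw [hz0]⟩
        apply Hno b hbS
        have hp1 : s ++ [M, 0] <+: σ b ++ ws'.flatMap σ := ⟨z' ++ t, by rw [← hst]; simp⟩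
        have hp2 : σ b <+: σ b ++ ws'.flatMap σ := List.prefix_append _ _
        have hpre : s ++ [M, 0] <+: σ b :=
          List.prefix_of_prefix_length_le hp1 hp2 (by simp; omega)
        obtain ⟨r, hr⟩ := hpre
        exact ⟨s, r, by rw [← hr, List.append_assoc]⟩

end AuxBlocks

lemma aux_factorWord_eq {A : Type*} (x : ℤ → A) (a : ℤ) (len : ℕ) :
    factorWord x a len = (List.range len).map (fun t : ℕ => x (a + (t : ℤ))) := by
  unfold factorWord
  simp only [bind_pure_comp, List.map_eq_map, List.map_map]
  rfl

lemma aux_factorWord_length {A : Type*} (x : ℤ → A) (a : ℤ) (len : ℕ) :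
    (factorWord x a len).length = len := by simp [aux_factorWord_eq]

lemma aux_factorWord_getElem {A : Type*} (x : ℤ → A) (a : ℤ) (len : ℕ) (i : ℕ) (h : i < len) :
    (factorWord x a len)[i]'(by rw [aux_factorWord_length]; exact h) = x (a + i) := by
  simp [aux_factorWord_eq]

lemma aux_factorWord_getD (x : ℤ → ℕ) (a : ℤ) (len : ℕ) (i : ℕ) (h : i < len) :
    (factorWord x a len).getD i 0 = x (a + i) := by
  rw [List.getD_eq_getElem _ _ (by rw [aux_factorWord_length]; exact h)]
  exact aux_factorWord_getElem x a len i h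

lemma aux_factorWord_succ_right {A : Type*} (x : ℤ → A) (a : ℤ) (len : ℕ) :
    factorWord x a (len + 1) = factorWord x a len ++ [x (a + len)] := by
  rw [aux_factorWord_eq, aux_factorWord_eq, List.range_succ, List.map_append]
  simp

lemma aux_factorWord_cons {A : Type*} (x : ℤ → A) (a : ℤ) (len : ℕ) :
    factorWord x a (len + 1) = x a :: factorWord x (a + 1) len := by
  rw [aux_factorWord_eq, aux_factorWord_eq, List.range_succ_eq_map]
  simp only [List.map_cons, List.map_map, Nat.cast_zero, add_zero]
  congr 1
  apply List.map_congr_left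
  intro i _
  simp only [Function.comp]
  congr 1
  push_cast
  ring

lemma aux_tauIter_succ (τ : ℕ → ℕ → List ℕ) (n d c : ℕ) :
    tauIter τ n (d + 1) c = (tauIter τ (n + 1) d c).flatMap (τ n) := by
  induction d generalizing c with
  | zero => simp [tauIter]
  | succ d ih =>
    show (τ (n + (d+1)) c).flatMap (tauIter τ n (d+1)) = _
    have h : tauIter τ (n+1) (d+1) c = (τ (n + 1 + d) c).flatMap (tauIter τ (n+1) d) := rfl
    rw [h, List.flatMap_assoc]
    have harg : n + 1 + d = n + (d + 1) := by omega
    rw [harg]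
    congr 1
    funext b
    exact ih b

lemma aux_tauIter_mem_lt (m : ℕ → ℕ) (τ : ℕ → ℕ → List ℕ)
    (hP2 : ∀ n a, a < m (n+1) → ∀ c ∈ τ n a, c < m n) :
    ∀ d N c, c < m (N + d) → ∀ b ∈ tauIter τ N d c, b < m N := by
  intro d
  induction d with
  | zero =>
    intro N c hc b hb
    simp [tauIter] at hb
    subst hb
    simpa using hc
  | succ d ih =>
    intro N c hc b hb
    simp only [tauIter, List.mem_flatMap] at hb
    obtain ⟨a, ha, hba⟩ := hb
    exact ih N a (hP2 (N + d) c hc a ha) b hba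

end Aux6

/-- Under Property `(P_k)`, a bifurcation signal at level `n ≥ 1` is one
of the letters `v_{1,n}, …, v_{k,n}`, and at the bifurcation point the two sequences read
`v_{i,n}` and `v_{i+1,n}`.  (Letters are `0`-based: `v_{i,n}` is `i - 1`.) -/
theorem signal_lt_k_of_propertyPk
    (k : ℕ) (hk : 1 ≤ k) (m : ℕ → ℕ) (τ : ℕ → ℕ → List ℕ) (hP : PropertyPk k m τ)
    (n : ℕ) (hn : 1 ≤ n) (x y : ℤ → ℕ)
    (hx : x ∈ SAdicLevel m τ n) (hy : y ∈ SAdicLevel m τ n)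
    (ℓ : ℤ) (heq : ∀ i < ℓ, x i = y i) (hne : x ℓ ≠ y ℓ) :
    x (ℓ - 1) < k ∧
      ((x ℓ = x (ℓ - 1) ∧ y ℓ = x (ℓ - 1) + 1) ∨
        (x ℓ = x (ℓ - 1) + 1 ∧ y ℓ = x (ℓ - 1))) := by
  obtain ⟨hPk, hP2, hP0, hPprim, hPpre, hPrep, hPend⟩ := hP
  obtain ⟨hxb, hxf⟩ := hx
  obtain ⟨hyb, hyf⟩ := hy
  have hkS : k < m (n+1) := hPk (n+1) (by omega)
  -- block properties of σ = τ n
  have Hne : ∀ b < m (n+1), τ n b ≠ [] := fun b hb => (hP2 n b hb).1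
  have HPkpre : ∀ b < m (n+1), auxPk k b <+: τ n b := by
    intro b hb
    unfold auxPk
    split
    · next h => exact hPpre n hn b h
    · next h => exact hPrep n hn b (by omega) hb
  have Hplen : ∀ b < m (n+1), auxPlen k b ≤ (τ n b).length := by
    intro b hb
    have h := (HPkpre b hb).length_le
    rwa [auxPk_length] at h
  have Hpget : ∀ b < m (n+1), ∀ i, i < auxPlen k b → (τ n b).getD i 0 = auxPget k b i := by
    intro b hb i hi
    rw [aux_prefix_getD (HPkpre b hb) (by rw [auxPk_length]; exact hi), auxPk_getD k b i hi]
  have Hhd : ∀ b < m (n+1), (τ n b).head? = some 0 := by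
    intro b hb
    rw [aux_head?_eq_getD _ (Hne b hb)]
    rw [Hpget b hb 0 (auxPlen_pos k b), auxPget_zero]
  have Hlast : ∀ b < m (n+1), (τ n b).getLast? = some (m n - 1) := by
    intro b hb
    obtain ⟨ini, hini⟩ := (hPend n hn b hb).1
    rw [← hini, List.getLast?_append]
    simp
  have Hno : ∀ b < m (n+1), ¬ [m n - 1, 0] <:+: τ n b := fun b hb => (hPend n hn b hb).2
  set Bn : ℕ := Finset.sup (Finset.range (m (n+1))) (fun b => (τ n b).length) with hBn
  have Hlen : ∀ b < m (n+1), (τ n b).length ≤ Bn := by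
    intro b hb
    exact Finset.le_sup (f := fun b => (τ n b).length) (Finset.mem_range.2 hb)
  -- every factor lives in a concatenation of blocks
  have FACT : ∀ z : ℤ → ℕ,
      (∀ (a : ℤ) (len : ℕ), ∃ N c, n < N ∧ c < m N ∧
        factorWord z a len <:+: tauIter τ n (N - n) c) →
      ∀ (a : ℤ) (len : ℕ), ∃ ws : List ℕ, (∀ b ∈ ws, b < m (n+1)) ∧
        factorWord z a len <:+: ws.flatMap (τ n) := by
    intro z hz a len
    obtain ⟨N, c, hN, hc, hinf⟩ := hz a len
    obtain ⟨d, hd⟩ : ∃ d, N - n = d + 1 := ⟨N - n - 1, by omega⟩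
    rw [hd, aux_tauIter_succ] at hinf
    refine ⟨tauIter τ (n+1) d c, ?_, hinf⟩
    intro b hb
    refine aux_tauIter_mem_lt m τ (fun n' a' ha' => (hP2 n' a' ha').2) d (n+1) c ?_ b hb
    have h : n + 1 + d = N := by omega
    rw [h]; exact hc
  -- occurrences of the word (m n - 1) 0 are syndetic in x
  have window : ∀ a : ℤ, ∃ p : ℤ, a < p ∧ p ≤ a + (Bn + 1) ∧
      x (p - 1) = m n - 1 ∧ x p = 0 := by
    intro a
    obtain ⟨ws, hws, hinf⟩ := FACT x hxf a (Bn + 1)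
    have hM0 : [m n - 1, 0] <:+: factorWord x a (Bn + 1) := by
      by_contra hcon
      have h := aux_L1 (τ n) (m (n+1)) (m n - 1) Bn Hne Hhd Hlast Hlen ws hws _ hinf hcon
      rw [aux_factorWord_length] at h
      omega
    obtain ⟨s, t, hst⟩ := hM0
    rw [List.append_assoc] at hst
    have hlen : s.length + (2 + t.length) = Bn + 1 := by
      have h := congrArg List.length hst
      simp [aux_factorWord_length] at h
      omega
    have e1 : x (a + s.length) = m n - 1 := by
      have h := aux_factorWord_getD x a (Bn + 1) s.length (by omega)
      rw [← hst] at h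
      rw [(aux_M0_at s t (m n - 1)).1] at h
      exact h.symm
    have e2 : x (a + s.length + 1) = 0 := by
      have h := aux_factorWord_getD x a (Bn + 1) (s.length + 1) (by omega)
      rw [← hst] at h
      rw [(aux_M0_at s t (m n - 1)).2] at h
      rw [show a + (s.length : ℤ) + 1 = a + ((s.length + 1 : ℕ) : ℤ) by push_cast; ring]
      exact h.symm
    exact ⟨a + s.length + 1, by omega, by omega,
      by rw [show a + (s.length : ℤ) + 1 - 1 = a + s.length by ring]; exact e1, e2⟩
  -- the greatest occurrence before ℓ
  obtain ⟨p, ⟨hpl, hpM, hp0⟩, hpmax⟩ :=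
    Int.exists_greatest_of_bdd (P := fun q => q ≤ ℓ - 1 ∧ x (q-1) = m n - 1 ∧ x q = 0)
      ⟨ℓ - 1, fun z hz => hz.1⟩
      (by
        obtain ⟨q, hq1, hq2, hq3, hq4⟩ := window (ℓ - 2 - Bn)
        exact ⟨q, by omega, hq3, hq4⟩)
  set t : ℕ := (ℓ - p).toNat with hdeft
  have htZ : (t : ℤ) = ℓ - p := Int.toNat_of_nonneg (by omega)
  have ht1 : 1 ≤ t := by omega
  -- the no-internal-occurrence condition
  have hM0gen : ∀ z : ℤ → ℕ, (∀ i, i < ℓ → x i = z i) →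
      ∀ z1 z2, factorWord z p (t+1) = z1 ++ [m n - 1, 0] ++ z2 → z2 = [] := by
    intro z hzeq z1 z2 hsplit
    rw [List.append_assoc] at hsplit
    have hlen12 : z1.length + (2 + z2.length) = t + 1 := by
      have h := congrArg List.length hsplit
      simp [aux_factorWord_length] at h
      omega
    have e1 : z (p + z1.length) = m n - 1 := by
      have h := aux_factorWord_getD z p (t + 1) z1.length (by omega)
      rw [hsplit, (aux_M0_at z1 z2 (m n - 1)).1] at h
      exact h.symm
    have e2 : z (p + z1.length + 1) = 0 := by
      have h := aux_factorWord_getD z p (t + 1) (z1.length + 1) (by omega)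
      rw [hsplit, (aux_M0_at z1 z2 (m n - 1)).2] at h
      rw [show p + (z1.length : ℤ) + 1 = p + ((z1.length + 1 : ℕ) : ℤ) by push_cast; ring]
      exact h.symm
    by_contra hz2ne
    have hz2 : 1 ≤ z2.length := List.length_pos_iff.2 hz2ne
    have hq : p + z1.length + 1 ≤ ℓ - 1 := by omega
    have e1' : x (p + z1.length) = m n - 1 := by
      rw [hzeq _ (by omega)]; exact e1
    have e2' : x (p + z1.length + 1) = 0 := by
      rw [hzeq _ (by omega)]; exact e2
    have h := hpmax (p + z1.length + 1)
      ⟨hq, by rw [show p + (z1.length : ℤ) + 1 - 1 = p + z1.length by ring]; exact e1', e2'⟩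
    omega
  -- desubstitution of x around the bifurcation
  obtain ⟨wsx, hwsx, hinfx⟩ := FACT x hxf (p-1) (t+2)
  have hconsx : factorWord x (p-1) (t+2) = (m n - 1) :: factorWord x p (t+1) := by
    rw [show t + 2 = (t+1) + 1 from rfl, aux_factorWord_cons]
    rw [show p - 1 + 1 = p by ring, hpM]
  rw [hconsx] at hinfx
  have hnex : factorWord x p (t+1) ≠ [] := by
    intro hcon
    have h := congrArg List.length hcon
    rw [aux_factorWord_length] at h
    simp at h
  have hheadx : (factorWord x p (t+1)).head? = some 0 := by
    rw [aux_head?_eq_getD _ hnex, aux_factorWord_getD x p (t+1) 0 (by omega)]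
    rw [show p + ((0:ℕ):ℤ) = p by push_cast; ring, hp0]
  have hL2x := aux_L2 (τ n) (m (n+1)) (m n - 1) Hne Hhd Hlast Hno wsx hwsx _ hnex hheadx hinfx
    (hM0gen x (fun i _ => rfl))
  -- desubstitution of y around the bifurcation
  obtain ⟨wsy, hwsy, hinfy⟩ := FACT y hyf (p-1) (t+2)
  have hconsy : factorWord y (p-1) (t+2) = (m n - 1) :: factorWord y p (t+1) := by
    rw [show t + 2 = (t+1) + 1 from rfl, aux_factorWord_cons]
    rw [show p - 1 + 1 = p by ring, ← heq (p-1) (by omega), hpM]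
  rw [hconsy] at hinfy
  have hney : factorWord y p (t+1) ≠ [] := by
    intro hcon
    have h := congrArg List.length hcon
    rw [aux_factorWord_length] at h
    simp at h
  have hheady : (factorWord y p (t+1)).head? = some 0 := by
    rw [aux_head?_eq_getD _ hney, aux_factorWord_getD y p (t+1) 0 (by omega)]
    rw [show p + ((0:ℕ):ℤ) = p by push_cast; ring, ← heq p (by omega), hp0]
  have hL2y := aux_L2 (τ n) (m (n+1)) (m n - 1) Hne Hhd Hlast Hno wsy hwsy _ hney hheady hinfy
    (hM0gen y heq)
  -- reading letters
  have hxget : ∀ i : ℕ, i < t + 1 → (factorWord x p (t+1)).getD i 0 = x (p + i) :=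
    fun i hi => aux_factorWord_getD x p (t+1) i hi
  have hyget : ∀ i : ℕ, i < t + 1 → (factorWord y p (t+1)).getD i 0 = y (p + i) :=
    fun i hi => aux_factorWord_getD y p (t+1) i hi
  have hxyeq : ∀ i : ℕ, i < t → x (p + i) = y (p + i) := by
    intro i hi
    exact heq (p + i) (by omega)
  have hflen : (factorWord x p (t+1)).length = t + 1 := aux_factorWord_length x p (t+1)
  have hflen' : (factorWord y p (t+1)).length = t + 1 := aux_factorWord_length y p (t+1)
  have hpt : p + (t : ℤ) = ℓ := by omega
  have hxl : x (p + (t:ℤ)) = x ℓ := by rw [hpt]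
  have hyl : y (p + (t:ℤ)) = y ℓ := by rw [hpt]
  -- the value chain for the prefix case
  have hval : ∀ c : ℕ, c < m (n+1) → ∀ w : ℤ → ℕ, factorWord w p (t+1) <+: τ n c →
      ∀ i : ℕ, i < t + 1 → i < auxPlen k c → w (p + i) = auxPget k c i := by
    intro c hc w hpre i hi hip
    have h1 : (factorWord w p (t+1)).getD i 0 = w (p + i) := aux_factorWord_getD w p (t+1) i hi
    have h2 : (τ n c).getD i 0 = (factorWord w p (t+1)).getD i 0 :=
      aux_prefix_getD hpre (by rw [aux_factorWord_length]; exact hi)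
    rw [← h1, ← h2, Hpget c hc i hip]
  -- the value chain for the full-block case
  have hvalF : ∀ c : ℕ, c < m (n+1) → ∀ w : ℤ → ℕ,
      factorWord w p (t+1) = τ n c ++ [0] →
      (τ n c).length = t ∧ w (p + (t:ℤ)) = 0 ∧
        (∀ i : ℕ, i < auxPlen k c → w (p + i) = auxPget k c i) := by
    intro c hc w hfull
    have hlc : (τ n c).length = t := by
      have h := congrArg List.length hfull
      rw [aux_factorWord_length] at h
      simp at h
      omega
    have hw0 : w (p + (t:ℤ)) = 0 := by
      have h := aux_factorWord_getD w p (t+1) t (by omega)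
      rw [hfull, List.getD_append_right _ _ _ _ (by omega)] at h
      rw [hlc] at h
      simp at h
      omega
    refine ⟨hlc, hw0, ?_⟩
    intro i hip
    have hit : i < t := by
      have := Hplen c hc
      omega
    have h1 : (factorWord w p (t+1)).getD i 0 = w (p + i) :=
      aux_factorWord_getD w p (t+1) i (by omega)
    rw [hfull, aux_getD_left _ _ _ (by omega), Hpget c hc i hip] at h1
    exact h1.symm
  -- main case analysis
  rcases hL2x with ⟨a, haS, hpa⟩ | ⟨a, haS, hea⟩ <;>
    rcases hL2y with ⟨b, hbS, hpb⟩ | ⟨b, hbS, heb⟩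
  · -- both prefixes of blocks
    have hab : a ≠ b := by
      rintro rfl
      have h1 : factorWord x p (t+1) = factorWord y p (t+1) := by
        apply List.IsPrefix.eq_of_length
          (List.prefix_of_prefix_length_le hpa hpb (by rw [hflen, hflen']))
        rw [hflen, hflen']
      have h2 := congrArg (fun l => l.getD t 0) h1
      rw [hxget t (by omega), hyget t (by omega)] at h2
      rw [hxl, hyl] at h2
      exact hne h2
    obtain ⟨j, hj1, hja, hjb, hagree, hvk, hdisj⟩ := aux_div_general k a b hk hab
    rcases lt_trichotomy j t with hjt | hjt | hjt
    · exfalso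
      have e1 : x (p + j) = auxPget k a j := hval a haS x hpa j (by omega) hja
      have e2 : y (p + j) = auxPget k b j := hval b hbS y hpb j (by omega) hjb
      have e3 : x (p + j) = y (p + j) := hxyeq j hjt
      rcases hdisj with ⟨h6, h7⟩ | ⟨h6, h7⟩ <;> omega
    · -- j = t : the bifurcation
      have hptj : p + (j : ℤ) = ℓ := by omega
      have e1 : x (p + ((j-1 : ℕ) : ℤ)) = auxPget k a (j-1) :=
        hval a haS x hpa (j-1) (by omega) (by omega)
      have e2 : x (p + (j:ℤ)) = auxPget k a j := hval a haS x hpa j (by omega) hja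
      have e3 : y (p + (j:ℤ)) = auxPget k b j := hval b hbS y hpb j (by omega) hjb
      have hv : x (ℓ - 1) = auxPget k a (j-1) := by
        rw [show ℓ - 1 = p + ((j-1 : ℕ) : ℤ) by omega]
        exact e1
      have hxv : x ℓ = auxPget k a j := by rw [← hptj]; exact e2
      have hyv : y ℓ = auxPget k b j := by rw [← hptj]; exact e3
      rcases hdisj with ⟨h6, h7⟩ | ⟨h6, h7⟩
      · exact ⟨by omega, Or.inl ⟨by omega, by omega⟩⟩
      · exact ⟨by omega, Or.inr ⟨by omega, by omega⟩⟩
    · exfalso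
      have e0 : auxPget k a t = auxPget k b t := hagree t hjt
      have e1 : x (p + (t:ℤ)) = auxPget k a t := hval a haS x hpa t (by omega) (by omega)
      have e2 : y (p + (t:ℤ)) = auxPget k b t := hval b hbS y hpb t (by omega) (by omega)
      rw [hxl] at e1
      rw [hyl] at e2
      exact hne (by omega)
  · -- x-prefix, y-full-block : impossible
    exfalso
    obtain ⟨hlb, hy0, hbget⟩ := hvalF b hbS y heb
    have hab : a ≠ b := by
      rintro rfl
      have h := hpa.length_le
      rw [hflen] at h
      omega
    obtain ⟨j, hj1, hja, hjb, hagree, hvk, hdisj⟩ := aux_div_general k a b hk hab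
    have hjt : j < t := by
      have := Hplen b hbS
      omega
    have e1 : x (p + j) = auxPget k a j := hval a haS x hpa j (by omega) hja
    have e2 : y (p + j) = auxPget k b j := hbget j hjb
    have e3 : x (p + j) = y (p + j) := hxyeq j hjt
    rcases hdisj with ⟨h6, h7⟩ | ⟨h6, h7⟩ <;> omega
  · -- x-full-block, y-prefix : impossible
    exfalso
    obtain ⟨hla, hx0, haget⟩ := hvalF a haS x hea
    have hab : a ≠ b := by
      rintro rfl
      have h := hpb.length_le
      rw [hflen'] at h
      omega
    obtain ⟨j, hj1, hja, hjb, hagree, hvk, hdisj⟩ := aux_div_general k a b hk hab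
    have hjt : j < t := by
      have := Hplen a haS
      omega
    have e1 : x (p + j) = auxPget k a j := haget j hja
    have e2 : y (p + j) = auxPget k b j := hval b hbS y hpb j (by omega) hjb
    have e3 : x (p + j) = y (p + j) := hxyeq j hjt
    rcases hdisj with ⟨h6, h7⟩ | ⟨h6, h7⟩ <;> omega
  · -- both full blocks : impossible
    exfalso
    obtain ⟨hla, hx0, -⟩ := hvalF a haS x hea
    obtain ⟨hlb, hy0, -⟩ := hvalF b hbS y heb
    rw [hxl] at hx0
    rw [hyl] at hy0
    exact hne (by omega)

end AsympSOE
end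

section
/- Let k ≥ 1 and let τ = (τ_n)_{n≥0} be a directive sequence of morphisms satisfying Property (P_k). Then the S-adic subshift (X_τ, S) has topological entropy zero. -/
open Filter Topology MeasureTheory

namespace AsympSOE

/-! ### Auxiliary lemmas for Statement 11 -/

section EntropyAux

open List

lemma infix_append_cases' {α : Type*} {w l₁ l₂ : List α} (h : w <:+: l₁ ++ l₂) :
    w <:+: l₁ ∨ w <:+: l₂ ∨ ∃ s p, w = s ++ p ∧ s <:+ l₁ ∧ p <+: l₂ := by
  obtain ⟨t₁, t₂, ht⟩ := h
  rw [append_assoc] at ht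
  rcases append_eq_append_iff.1 ht with ⟨a', h1, h2⟩ | ⟨c', h1, h2⟩
  · rcases append_eq_append_iff.1 h2 with ⟨b', hb1, hb2⟩ | ⟨c'', hc1, hc2⟩
    · left
      exact ⟨t₁, b', by rw [h1, hb1, append_assoc]⟩
    · right; right
      exact ⟨a', c'', hc1, ⟨t₁, h1.symm⟩, ⟨t₂, hc2.symm⟩⟩
  · right; left
    exact ⟨c', t₂, by rw [h2, append_assoc]⟩

lemma prefix_append_cases' {α : Type*} {p l₁ l₂ : List α} (h : p <+: l₁ ++ l₂) :
    p <+: l₁ ∨ ∃ p', p = l₁ ++ p' ∧ p' <+: l₂ := by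
  obtain ⟨t, ht⟩ := h
  rcases append_eq_append_iff.1 ht with ⟨a', h1, h2⟩ | ⟨c', h1, h2⟩
  · exact Or.inl ⟨a', h1.symm⟩
  · exact Or.inr ⟨c', h1, ⟨t, h2.symm⟩⟩

lemma suffix_append_cases' {α : Type*} {s l₁ l₂ : List α} (h : s <:+ l₁ ++ l₂) :
    s <:+ l₂ ∨ ∃ s₀, s = s₀ ++ l₂ ∧ s₀ <:+ l₁ := by
  obtain ⟨t, ht⟩ := h
  rcases append_eq_append_iff.1 ht with ⟨a', h1, h2⟩ | ⟨c', h1, h2⟩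
  · exact Or.inr ⟨a', h2, ⟨t, h1.symm⟩⟩
  · exact Or.inl ⟨c', h2.symm⟩

lemma prefix_flatMap' {α β : Type*} (f : α → List β) :
    ∀ (u : List α) (p : List β), p <+: u.flatMap f →
    (∃ v, v <+: u ∧ p = v.flatMap f) ∨
    ∃ v b p₀, v <+: u ∧ b ∈ u ∧ p₀ <+: f b ∧ p = v.flatMap f ++ p₀ := by
  intro u
  induction u with
  | nil =>
    intro p hp
    rw [flatMap_nil, prefix_nil] at hp
    exact Or.inl ⟨[], prefix_refl [], by simp [hp]⟩
  | cons a u' ih =>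
    intro p hp
    rw [flatMap_cons] at hp
    rcases prefix_append_cases' hp with h | ⟨p', rfl, hp'⟩
    · right
      exact ⟨[], a, p, nil_prefix, mem_cons_self, h, by simp⟩
    · rcases ih p' hp' with ⟨v, hv, rfl⟩ | ⟨v, b, p₀, hv, hb, hp₀, rfl⟩
      · left
        exact ⟨a :: v, cons_prefix_cons.2 ⟨rfl, hv⟩, by simp [flatMap_cons]⟩
      · right
        exact ⟨a :: v, b, p₀, cons_prefix_cons.2 ⟨rfl, hv⟩, mem_cons_of_mem a hb, hp₀,
          by simp [flatMap_cons]⟩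

lemma suffix_flatMap' {α β : Type*} (f : α → List β) :
    ∀ (u : List α) (s : List β), s <:+ u.flatMap f →
    (∃ v, v <:+ u ∧ s = v.flatMap f) ∨
    ∃ a v s₀, a ∈ u ∧ v <:+ u ∧ s₀ <:+ f a ∧ s = s₀ ++ v.flatMap f := by
  intro u
  induction u with
  | nil =>
    intro s hs
    rw [flatMap_nil, suffix_nil] at hs
    exact Or.inl ⟨[], suffix_refl [], by simp [hs]⟩
  | cons a u' ih =>
    intro s hs
    rw [flatMap_cons] at hs
    rcases suffix_append_cases' hs with h | ⟨s₀, rfl, hs₀⟩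
    · rcases ih s h with ⟨v, hv, rfl⟩ | ⟨b, v, s₀, hb, hv, hs₀, rfl⟩
      · exact Or.inl ⟨v, hv.trans (suffix_cons a u'), rfl⟩
      · exact Or.inr ⟨b, v, s₀, mem_cons_of_mem a hb, hv.trans (suffix_cons a u'), hs₀, rfl⟩
    · exact Or.inr ⟨a, u', s₀, mem_cons_self, suffix_cons a u', hs₀, rfl⟩

lemma infix_flatMap_decomp' {α β : Type*} {f : α → List β} {u : List α} {w : List β}
    (h : w <:+: u.flatMap f) (hw : w ≠ []) :
    (∃ a ∈ u, w <:+: f a) ∨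
    ∃ (a b : α) (s : List β) (v : List α) (p : List β),
      a ∈ u ∧ b ∈ u ∧ (∀ d ∈ v, d ∈ u) ∧ s <:+ f a ∧ p <+: f b ∧
      w = s ++ v.flatMap f ++ p := by
  obtain ⟨pre, suf, hL⟩ := h
  have hu : u ≠ [] := by
    rintro rfl
    rw [flatMap_nil] at hL
    rcases append_eq_nil_iff.1 hL with ⟨h1, -⟩
    exact hw (append_eq_nil_iff.1 h1).2
  obtain ⟨a0, ha0⟩ := exists_mem_of_ne_nil u hu
  have hsuf : w ++ suf <:+ u.flatMap f := ⟨pre, by rw [← hL, append_assoc]⟩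
  rcases suffix_flatMap' f u (w ++ suf) hsuf with ⟨v, hv, hev⟩ | ⟨a, v, s₀, ha, hv, hs₀, hev⟩
  · have hwp : w <+: v.flatMap f := ⟨suf, hev⟩
    rcases prefix_flatMap' f v w hwp with ⟨v', hv', rfl⟩ | ⟨v', b, p₀, hv', hb, hp₀, rfl⟩
    · right
      exact ⟨a0, a0, [], v', [], ha0, ha0,
        fun d hd => hv.sublist.subset (hv'.sublist.subset hd), nil_suffix, nil_prefix,
        by simp⟩
    · right
      exact ⟨a0, b, [], v', p₀, ha0, hv.sublist.subset hb,
        fun d hd => hv.sublist.subset (hv'.sublist.subset hd), nil_suffix, hp₀, by simp⟩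
  · have hwp : w <+: s₀ ++ v.flatMap f := ⟨suf, hev⟩
    rcases prefix_append_cases' hwp with hws | ⟨w', rfl, hw'⟩
    · left
      exact ⟨a, ha, hws.isInfix.trans hs₀.isInfix⟩
    · rcases prefix_flatMap' f v w' hw' with ⟨v', hv', rfl⟩ | ⟨v', b, p₀, hv', hb, hp₀, rfl⟩
      · right
        exact ⟨a, a0, s₀, v', [], ha, ha0,
          fun d hd => hv.sublist.subset (hv'.sublist.subset hd), hs₀, nil_prefix, by simp⟩
      · right
        exact ⟨a, b, s₀, v', p₀, ha, hv.sublist.subset hb,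
          fun d hd => hv.sublist.subset (hv'.sublist.subset hd), hs₀, hp₀,
          by rw [append_assoc]⟩

lemma sum_map_const_le {α : Type*} (g : α → ℕ) (c : ℕ) :
    ∀ (v : List α), (∀ d ∈ v, c ≤ g d) → v.length * c ≤ (v.map g).sum := by
  intro v
  induction v with
  | nil => simp
  | cons d t ih =>
    intro h
    have h1 := h d (mem_cons_self)
    have h2 := ih fun x hx => h x (mem_cons_of_mem d hx)
    simp only [length_cons, map_cons, sum_cons]
    calc (t.length + 1) * c = c + t.length * c := by ring
    _ ≤ g d + (t.map g).sum := add_le_add h1 h2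

lemma cost_le_sum_map (g : ℕ → ℕ) (D : ℕ) :
    ∀ (v : List ℕ), (∀ d ∈ v, (d + 1) * D ≤ g d) →
      (v.sum + v.length) * D ≤ (v.map g).sum := by
  intro v
  induction v with
  | nil => simp
  | cons d t ih =>
    intro h
    have h1 := h d (mem_cons_self)
    have h2 := ih fun x hx => h x (mem_cons_of_mem d hx)
    simp only [sum_cons, length_cons, map_cons]
    calc (d + t.sum + (t.length + 1)) * D = (d + 1) * D + (t.sum + t.length) * D := by ring
    _ ≤ g d + (t.map g).sum := add_le_add h1 h2

lemma tauIter_zero' (τ : ℕ → ℕ → List ℕ) (n a : ℕ) : tauIter τ n 0 a = [a] := rfl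

lemma tauIter_succ' (τ : ℕ → ℕ → List ℕ) (n d a : ℕ) :
    tauIter τ n (d + 1) a = (τ (n + d) a).flatMap (tauIter τ n d) := rfl

lemma tauIter_add (τ : ℕ → ℕ → List ℕ) (L : ℕ) :
    ∀ (e a : ℕ), tauIter τ 0 (L + e) a = (tauIter τ L e a).flatMap (tauIter τ 0 L) := by
  intro e
  induction e with
  | zero => intro a; simp [tauIter_zero']
  | succ e ih =>
    intro a
    have hfe : tauIter τ 0 (L + e) = fun b => (tauIter τ L e b).flatMap (tauIter τ 0 L) :=
      funext ih
    rw [show L + (e + 1) = (L + e) + 1 by omega, tauIter_succ', zero_add, tauIter_succ',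
      List.flatMap_assoc, hfe]

end EntropyAux


section EntropyAux2

open List

variable {k : ℕ} {m : ℕ → ℕ} {τ : ℕ → ℕ → List ℕ}

lemma letters_lt (h2 : ∀ n a, a < m (n + 1) → τ n a ≠ [] ∧ ∀ c ∈ τ n a, c < m n) (L : ℕ) :
    ∀ (e c : ℕ), c < m (L + e) → ∀ d ∈ tauIter τ L e c, d < m L := by
  intro e
  induction e with
  | zero =>
    intro c hc d hd
    rw [tauIter_zero', mem_singleton] at hd
    exact hd ▸ hc
  | succ e ih =>
    intro c hc d hd
    rw [tauIter_succ', mem_flatMap] at hd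
    obtain ⟨b, hb, hd⟩ := hd
    exact ih b ((h2 (L + e) c (by rwa [← Nat.add_assoc] at hc)).2 b hb) d hd

lemma tauIter_ne_nil (h2 : ∀ n a, a < m (n + 1) → τ n a ≠ [] ∧ ∀ c ∈ τ n a, c < m n) :
    ∀ (j c : ℕ), c < m j → tauIter τ 0 j c ≠ [] := by
  intro j
  induction j with
  | zero => intro c _; simp [tauIter_zero']
  | succ j ih =>
    intro c hc
    rw [tauIter_succ', zero_add]
    obtain ⟨hne, hlt⟩ := h2 j c hc
    obtain ⟨b, hb⟩ := exists_mem_of_ne_nil _ hne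
    intro hnil
    rw [flatMap_eq_nil_iff] at hnil
    exact ih b (hlt b hb) (hnil b hb)

lemma two_pow_le_len (hk : 1 ≤ k) (h1 : ∀ n, 1 ≤ n → k < m n)
    (h2 : ∀ n a, a < m (n + 1) → τ n a ≠ [] ∧ ∀ c ∈ τ n a, c < m n)
    (h4 : ∀ n, 1 ≤ n → ∀ a, a < m (n + 1) → ∀ b, b < m n → b ∈ τ n a) :
    ∀ j, 1 ≤ j → ∀ c, c < m j → 2 ^ (j - 1) ≤ (tauIter τ 0 j c).length := by
  intro j hj
  induction j, hj using Nat.le_induction with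
  | base =>
    intro c hc
    have h : tauIter τ 0 1 c = τ 0 c := by
      rw [tauIter_succ', show tauIter τ 0 0 = fun a => [a] from rfl, flatMap_singleton']
    rw [h]
    simpa using Nat.one_le_iff_ne_zero.2 (fun h0 => (h2 0 c hc).1 (length_eq_zero_iff.1 h0))
  | succ j hj ih =>
    intro c hc
    have h0m : 0 < m j := lt_of_le_of_lt (Nat.zero_le k) (h1 j hj)
    have h1m : 1 < m j := lt_of_le_of_lt hk (h1 j hj)
    have hmem0 : (0 : ℕ) ∈ τ j c := h4 j hj c hc 0 h0m
    have hmem1 : (1 : ℕ) ∈ τ j c := h4 j hj c hc 1 h1m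
    have hlen2 : 2 ≤ (τ j c).length := by
      have hsub : ({0, 1} : Finset ℕ) ⊆ (τ j c).toFinset := by
        intro x hx
        simp only [Finset.mem_insert, Finset.mem_singleton] at hx
        rcases hx with rfl | rfl <;> simpa [List.mem_toFinset]
      calc 2 = ({0, 1} : Finset ℕ).card := by decide
      _ ≤ (τ j c).toFinset.card := Finset.card_le_card hsub
      _ ≤ (τ j c).length := (τ j c).toFinset_card_le
    rw [tauIter_succ', zero_add, length_flatMap]
    have hsum : (τ j c).length * 2 ^ (j - 1) ≤
        ((τ j c).map fun a => (tauIter τ 0 j a).length).sum :=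
      sum_map_const_le _ _ _ (fun d hd => ih d ((h2 j c hc).2 d hd))
    calc 2 ^ (j + 1 - 1) = 2 * 2 ^ (j - 1) := by
          rw [Nat.add_sub_cancel, ← pow_succ']
          congr 1
          omega
    _ ≤ (τ j c).length * 2 ^ (j - 1) := Nat.mul_le_mul_right _ hlen2
    _ ≤ _ := hsum

lemma cost_le_len (hk : 1 ≤ k) (h1 : ∀ n, 1 ≤ n → k < m n)
    (h2 : ∀ n a, a < m (n + 1) → τ n a ≠ [] ∧ ∀ c ∈ τ n a, c < m n)
    (h4 : ∀ n, 1 ≤ n → ∀ a, a < m (n + 1) → ∀ b, b < m n → b ∈ τ n a)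
    (h6 : ∀ n, 1 ≤ n → ∀ a, k < a → a < m (n + 1) →
      (List.replicate (a + 1) 0 ++ [1]) <+: τ n a)
    (L : ℕ) (hL : 2 ≤ L) :
    ∀ d, d < m L → (d + 1) * 2 ^ (L - 2) ≤ (tauIter τ 0 L d).length := by
  intro d hd
  obtain ⟨j, rfl, hj⟩ : ∃ j, L = j + 1 ∧ 1 ≤ j := ⟨L - 1, by omega, by omega⟩
  have hlen : d + 1 ≤ (τ j d).length := by
    rcases le_or_gt d k with hdk | hdk
    · have hsub : Finset.range (m j) ⊆ (τ j d).toFinset := by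
        intro x hx
        rw [Finset.mem_range] at hx
        rw [List.mem_toFinset]
        exact h4 j hj d hd x hx
      calc d + 1 ≤ k + 1 := by omega
      _ ≤ m j := h1 j hj
      _ = (Finset.range (m j)).card := (Finset.card_range _).symm
      _ ≤ (τ j d).toFinset.card := Finset.card_le_card hsub
      _ ≤ (τ j d).length := (τ j d).toFinset_card_le
    · have hpre := h6 j hj d hdk hd
      have := hpre.length_le
      rw [length_append, length_replicate] at this
      exact le_trans (by omega) this
  rw [tauIter_succ', zero_add, length_flatMap]
  have hsum : (τ j d).length * 2 ^ (j - 1) ≤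
      ((τ j d).map fun a => (tauIter τ 0 j a).length).sum :=
    sum_map_const_le _ _ _
      (fun b hb => two_pow_le_len hk h1 h2 h4 j hj b ((h2 j d hd).2 b hb))
  have heq : j + 1 - 2 = j - 1 := by omega
  rw [heq]
  calc (d + 1) * 2 ^ (j - 1) ≤ (τ j d).length * 2 ^ (j - 1) :=
        Nat.mul_le_mul_right _ hlen
  _ ≤ _ := hsum

lemma tauIter_up (hk : 1 ≤ k) (h1 : ∀ n, 1 ≤ n → k < m n)
    (h4 : ∀ n, 1 ≤ n → ∀ a, a < m (n + 1) → ∀ b, b < m n → b ∈ τ n a) :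
    ∀ (t j c : ℕ), 1 ≤ j → c < m j →
      ∃ c', c' < m (j + t) ∧ tauIter τ 0 j c <:+: tauIter τ 0 (j + t) c' := by
  intro t
  induction t with
  | zero => intro j c hj hc; exact ⟨c, hc, infix_refl _⟩
  | succ t ih =>
    intro j c hj hc
    obtain ⟨c', hc', hinf⟩ := ih j c hj hc
    have h0m : 0 < m (j + t + 1) := lt_of_le_of_lt (Nat.zero_le k) (h1 _ (by omega))
    have hmem : c' ∈ τ (j + t) 0 := h4 (j + t) (by omega) 0 h0m c' hc'
    obtain ⟨l₁, l₂, hsplit⟩ := List.append_of_mem hmem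
    have hJ : j + (t + 1) = (j + t) + 1 := by omega
    refine ⟨0, by rw [hJ]; exact h0m, ?_⟩
    rw [hJ, tauIter_succ', zero_add, hsplit, flatMap_append, flatMap_cons]
    refine hinf.trans ⟨l₁.flatMap (tauIter τ 0 (j + t)), l₂.flatMap (tauIter τ 0 (j + t)), ?_⟩
    rw [append_assoc]
end EntropyAux2

section EntropyAux3

open List

/-- Lists of naturals with `sum + length ≤ M` ("compositions data"). -/
def costSet (M : ℕ) : Set (List ℕ) := {v | v.sum + v.length ≤ M}

lemma costSet_finite_card : ∀ M : ℕ, (costSet M).Finite ∧ (costSet M).ncard ≤ 2 ^ (M + 1) - 1 := by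
  intro M
  induction M with
  | zero =>
    have h : costSet 0 = {([] : List ℕ)} := by
      ext v
      simp only [costSet, Set.mem_setOf_eq, Set.mem_singleton_iff]
      constructor
      · intro h
        exact length_eq_zero_iff.1 (by omega)
      · rintro rfl; simp
    rw [h]
    exact ⟨Set.finite_singleton _, by simp⟩
  | succ M ih =>
    set g : List ℕ → List ℕ := fun v => match v with
      | [] => ([] : List ℕ)
      | d :: t => (d + 1) :: t with hg
    have hsub : costSet (M + 1) ⊆
        insert [] ((List.cons 0) '' costSet M ∪ g '' costSet M) := by
      intro v hv
      simp only [costSet, Set.mem_setOf_eq] at hv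
      match v with
      | [] => exact Set.mem_insert _ _
      | 0 :: t =>
        refine Set.mem_insert_of_mem _ (Or.inl ⟨t, ?_, rfl⟩)
        simp only [sum_cons, length_cons] at hv
        simp only [costSet, Set.mem_setOf_eq]
        omega
      | (d + 1) :: t =>
        refine Set.mem_insert_of_mem _ (Or.inr ⟨d :: t, ?_, rfl⟩)
        simp only [sum_cons, length_cons] at hv ⊢
        simp only [costSet, Set.mem_setOf_eq, sum_cons, length_cons]
        omega
    have hfin₂ : ((List.cons 0) '' costSet M ∪ g '' costSet M).Finite :=
      (ih.1.image _).union (ih.1.image _)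
    have hfin : (insert ([] : List ℕ) ((List.cons 0) '' costSet M ∪ g '' costSet M)).Finite :=
      hfin₂.insert _
    constructor
    · exact hfin.subset hsub
    · have h1 : (costSet (M + 1)).ncard ≤
          (insert ([] : List ℕ) ((List.cons 0) '' costSet M ∪ g '' costSet M)).ncard :=
        Set.ncard_le_ncard hsub hfin
      have h2 : (insert ([] : List ℕ) ((List.cons 0) '' costSet M ∪ g '' costSet M)).ncard ≤
          ((List.cons 0) '' costSet M ∪ g '' costSet M).ncard + 1 :=
        Set.ncard_insert_le _ _
      have h3 : ((List.cons 0) '' costSet M ∪ g '' costSet M).ncard ≤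
          ((List.cons 0) '' costSet M).ncard + (g '' costSet M).ncard :=
        Set.ncard_union_le _ _
      have h4 : ((List.cons 0) '' costSet M).ncard ≤ (costSet M).ncard :=
        Set.ncard_image_le ih.1
      have h5 : (g '' costSet M).ncard ≤ (costSet M).ncard :=
        Set.ncard_image_le ih.1
      have hpow : 1 ≤ 2 ^ (M + 1) := Nat.one_le_two_pow
      have hpow2 : 2 ^ (M + 1 + 1) = 2 * 2 ^ (M + 1) := by rw [pow_succ']
      omega

lemma factors_finite (l : List ℕ) : {w : List ℕ | w <:+: l}.Finite := by
  refine Set.Finite.subset l.sublists.toFinset.finite_toSet ?_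
  intro w hw
  simp only [Finset.coe_sort_coe, Finset.mem_coe, List.mem_toFinset, List.mem_sublists]
  exact hw.sublist

lemma ncard_prod_eq {α β : Type*} (s : Set α) (t : Set β) :
    (s ×ˢ t).ncard = s.ncard * t.ncard := by
  rw [← Nat.card_coe_set_eq, ← Nat.card_coe_set_eq, ← Nat.card_coe_set_eq]
  rw [Nat.card_congr (Equiv.Set.prod s t), Nat.card_prod]

/-- The set of factors of the level-`L` blocks. -/
def factSet (m : ℕ → ℕ) (τ : ℕ → ℕ → List ℕ) (L : ℕ) : Set (List ℕ) :=
  {w | ∃ c, c < m L ∧ w <:+: tauIter τ 0 L c}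

lemma factSet_finite (m : ℕ → ℕ) (τ : ℕ → ℕ → List ℕ) (L : ℕ) : (factSet m τ L).Finite := by
  have hsub : factSet m τ L ⊆ ⋃ c ∈ Set.Iio (m L), {w : List ℕ | w <:+: tauIter τ 0 L c} := by
    rintro w ⟨c, hc, hw⟩
    exact Set.mem_biUnion hc hw
  exact Set.Finite.subset ((Set.finite_Iio _).biUnion fun c _ => factors_finite _) hsub

end EntropyAux3

section EntropyAux4

open List

variable {k : ℕ} {m : ℕ → ℕ} {τ : ℕ → ℕ → List ℕ}

lemma lang_subset (hk : 1 ≤ k) (hP : PropertyPk k m τ) (L : ℕ) (hL : 2 ≤ L)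
    (n : ℕ) (hn : 1 ≤ n) :
    langOf (SAdicLevel m τ 0) n ⊆
      factSet m τ L ∪
      (fun x : List ℕ × List ℕ × List ℕ =>
          x.1 ++ x.2.1.flatMap (tauIter τ 0 L) ++ x.2.2) ''
        (factSet m τ L ×ˢ costSet (n / 2 ^ (L - 2)) ×ˢ factSet m τ L) := by
  obtain ⟨h1, h2, h3, h4, h5, h6, h7⟩ := hP
  rintro w ⟨x, hx, a, hw⟩
  have hwlen : w.length = n := by rw [← hw]; simp [Function.comp_def]
  obtain ⟨N, c, hN, hc, hinf⟩ := hx.2 a n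
  rw [Nat.sub_zero] at hinf
  unfold factorWord at hinf
  rw [hw] at hinf
  rcases le_or_gt N L with hNL | hLN
  · -- push up to level L
    obtain ⟨c', hc', hup⟩ := tauIter_up hk h1 h4 (L - N) N c hN hc
    rw [show N + (L - N) = L by omega] at hc' hup
    exact Or.inl ⟨c', hc', hinf.trans hup⟩
  · have he : N = L + (N - L) := by omega
    rw [he, tauIter_add] at hinf
    have hwne : w ≠ [] := by
      intro h
      rw [h] at hwlen
      simp at hwlen
      omega
    have hult : ∀ d ∈ tauIter τ L (N - L) c, d < m L :=
      letters_lt h2 L (N - L) c (by rw [← he]; exact hc)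
    rcases infix_flatMap_decomp' hinf hwne with
      ⟨a', ha', hwa⟩ | ⟨a', b, s, v, p, ha', hb, hv, hs, hp, heq⟩
    · exact Or.inl ⟨a', hult a' ha', hwa⟩
    · right
      refine ⟨(s, v, p), ?_, heq.symm⟩
      have hsmem : s ∈ factSet m τ L := ⟨a', hult a' ha', hs.isInfix⟩
      have hpmem : p ∈ factSet m τ L := ⟨b, hult b hb, hp.isInfix⟩
      have hvmem : v ∈ costSet (n / 2 ^ (L - 2)) := by
        have hpow : 0 < 2 ^ (L - 2) := Nat.pow_pos (by norm_num)
        have hcost : (v.sum + v.length) * 2 ^ (L - 2) ≤ n := by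
          calc (v.sum + v.length) * 2 ^ (L - 2)
              ≤ (v.map fun d => (tauIter τ 0 L d).length).sum :=
                cost_le_sum_map _ _ v fun d hd =>
                  cost_le_len hk h1 h2 h4 h6 L hL d (hult d (hv d hd))
          _ = (v.flatMap (tauIter τ 0 L)).length := length_flatMap.symm
          _ ≤ w.length := by
                rw [heq]
                simp only [length_append]
                omega
          _ = n := hwlen
        exact (Nat.le_div_iff_mul_le hpow).2 hcost
      exact Set.mem_prod.2 ⟨hsmem, Set.mem_prod.2 ⟨hvmem, hpmem⟩⟩

end EntropyAux4

/-- Under Property `(P_k)`, the S-adic subshift `(X_τ, S)` has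
topological entropy zero: `(1/n) log #L_n(X_τ) → 0`. -/
theorem entropy_zero_of_propertyPk
    (k : ℕ) (hk : 1 ≤ k) (m : ℕ → ℕ) (τ : ℕ → ℕ → List ℕ) (hP : PropertyPk k m τ) :
    Filter.Tendsto
      (fun n : ℕ => Real.log (complexityOf (SAdicLevel m τ 0) n) / n)
      Filter.atTop (nhds 0) := by
  classical
  rw [Metric.tendsto_atTop]
  intro ε hε
  -- choose the level L = Lo + 2 so that (log 2) / 2 ^ Lo < ε / 2
  obtain ⟨Lo, hLo⟩ := pow_unbounded_of_one_lt (R := ℝ) (2 * Real.log 2 / ε) one_lt_two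
  set L : ℕ := Lo + 2 with hLdef
  have hL : 2 ≤ L := by omega
  have hL2 : L - 2 = Lo := by omega
  set F : ℕ := (factSet m τ L).ncard with hF
  set D : ℕ := F + 1 with hD
  have hD1 : 1 ≤ D := by omega
  -- the counting bound, for every n ≥ 1
  have key : ∀ n : ℕ, 1 ≤ n →
      complexityOf (SAdicLevel m τ 0) n ≤ D ^ 2 * 2 ^ (n / 2 ^ Lo + 2) := by
    intro n hn
    set M : ℕ := n / 2 ^ (L - 2) with hM
    have hMeq : M = n / 2 ^ Lo := by rw [hM, hL2]
    have hsub := lang_subset hk hP L hL n hn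
    have hFfin := factSet_finite m τ L
    have hCfin : (costSet M).Finite := (costSet_finite_card M).1
    have hprodfin : ((factSet m τ L) ×ˢ costSet M ×ˢ (factSet m τ L)).Finite :=
      hFfin.prod (hCfin.prod hFfin)
    have hbig : (factSet m τ L ∪
        (fun x : List ℕ × List ℕ × List ℕ =>
          x.1 ++ x.2.1.flatMap (tauIter τ 0 L) ++ x.2.2) ''
        (factSet m τ L ×ˢ costSet M ×ˢ factSet m τ L)).Finite :=
      hFfin.union (hprodfin.image _)
    have h0 : complexityOf (SAdicLevel m τ 0) n ≤
        (factSet m τ L).ncard +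
        ((factSet m τ L) ×ˢ costSet M ×ˢ (factSet m τ L)).ncard := by
      refine le_trans (Set.ncard_le_ncard hsub hbig) ?_
      refine le_trans (Set.ncard_union_le _ _) ?_
      exact Nat.add_le_add_left (Set.ncard_image_le hprodfin) _
    rw [ncard_prod_eq, ncard_prod_eq] at h0
    have hcost : (costSet M).ncard ≤ 2 ^ (M + 1) :=
      le_trans (costSet_finite_card M).2 (Nat.sub_le _ _)
    have h1 : complexityOf (SAdicLevel m τ 0) n ≤ F + F * (2 ^ (M + 1) * F) := by
      refine le_trans h0 ?_
      exact Nat.add_le_add_left (Nat.mul_le_mul_left _ (Nat.mul_le_mul_right _ hcost)) _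
    have h2 : F + F * (2 ^ (M + 1) * F) ≤ D ^ 2 * 2 ^ (M + 2) := by
      have e0 : 1 ≤ 2 ^ (M + 1) := Nat.one_le_two_pow
      have e1 : F * (2 ^ (M + 1) * F) ≤ D * (2 ^ (M + 1) * D) :=
        Nat.mul_le_mul (by omega) (Nat.mul_le_mul_left _ (by omega))
      have e2 : F ≤ D * (2 ^ (M + 1) * D) := by
        calc F ≤ D * (1 * 1) := by omega
        _ ≤ D * (2 ^ (M + 1) * D) := Nat.mul_le_mul_left _ (Nat.mul_le_mul e0 hD1)
      calc F + F * (2 ^ (M + 1) * F) ≤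
          D * (2 ^ (M + 1) * D) + D * (2 ^ (M + 1) * D) := Nat.add_le_add e2 e1
      _ = D ^ 2 * 2 ^ (M + 2) := by ring
    rw [hMeq] at h2
    exact le_trans h1 h2
  -- pass to logarithms
  have hlog : ∀ n : ℕ, 1 ≤ n →
      Real.log (complexityOf (SAdicLevel m τ 0) n) ≤
        2 * Real.log D + ((n / 2 ^ Lo : ℕ) + 2) * Real.log 2 := by
    intro n hn
    have hrhs : (0:ℝ) ≤ 2 * Real.log D + ((n / 2 ^ Lo : ℕ) + 2) * Real.log 2 := by
      have l1 : (0:ℝ) ≤ Real.log D := Real.log_natCast_nonneg D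
      have l2 : (0:ℝ) ≤ Real.log 2 := Real.log_nonneg one_le_two
      positivity
    rcases Nat.eq_zero_or_pos (complexityOf (SAdicLevel m τ 0) n) with h0 | h0
    · rw [h0]; simpa using hrhs
    · have hle : ((complexityOf (SAdicLevel m τ 0) n : ℝ)) ≤
          (D:ℝ) ^ 2 * 2 ^ (n / 2 ^ Lo + 2) := by
        have := key n hn
        calc ((complexityOf (SAdicLevel m τ 0) n : ℝ)) ≤
            ((D ^ 2 * 2 ^ (n / 2 ^ Lo + 2) : ℕ) : ℝ) := Nat.cast_le.2 this
        _ = (D:ℝ) ^ 2 * 2 ^ (n / 2 ^ Lo + 2) := by push_cast; ring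
      have hlog1 := Real.log_le_log (by exact_mod_cast h0) hle
      rw [Real.log_mul (by positivity) (by positivity), Real.log_pow, Real.log_pow] at hlog1
      refine le_trans hlog1 (le_of_eq ?_)
      push_cast
      ring
  -- find the threshold
  have hKnonneg : (0:ℝ) ≤ 2 * Real.log D + 2 * Real.log 2 := by
    have l1 : (0:ℝ) ≤ Real.log D := Real.log_natCast_nonneg D
    have l2 : (0:ℝ) ≤ Real.log 2 := Real.log_nonneg one_le_two
    positivity
  have hev : ∀ᶠ n : ℕ in Filter.atTop,
      (2 * Real.log D + 2 * Real.log 2) / (n:ℝ) < ε / 2 :=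
    (tendsto_const_div_atTop_nhds_zero_nat _).eventually_lt_const (half_pos hε)
  obtain ⟨N₀, hN₀⟩ := Filter.eventually_atTop.1 hev
  refine ⟨max N₀ 1, fun n hn => ?_⟩
  have hn1 : 1 ≤ n := le_trans (le_max_right _ _) hn
  have hnN : N₀ ≤ n := le_trans (le_max_left _ _) hn
  have hnpos : (0:ℝ) < n := by exact_mod_cast hn1
  have hfnonneg : 0 ≤ Real.log (complexityOf (SAdicLevel m τ 0) n) / n :=
    div_nonneg (Real.log_natCast_nonneg _) (le_of_lt hnpos)
  rw [Real.dist_0_eq_abs, abs_of_nonneg hfnonneg]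
  have hlog2 : (0:ℝ) ≤ Real.log 2 := Real.log_nonneg one_le_two
  have hpowpos : (0:ℝ) < 2 ^ Lo := by positivity
  have hstep1 : Real.log (complexityOf (SAdicLevel m τ 0) n) / n ≤
      (2 * Real.log D + ((n:ℝ) / 2 ^ Lo + 2) * Real.log 2) / n := by
    have hMle : ((n / 2 ^ Lo : ℕ) : ℝ) ≤ (n:ℝ) / 2 ^ Lo := by
      have := Nat.cast_div_le (α := ℝ) (m := n) (n := 2 ^ Lo)
      simpa [Nat.cast_pow] using this
    have hnum : Real.log (complexityOf (SAdicLevel m τ 0) n) ≤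
        2 * Real.log D + ((n:ℝ) / 2 ^ Lo + 2) * Real.log 2 := by
      refine le_trans (hlog n hn1) ?_
      have : (((n / 2 ^ Lo : ℕ) : ℝ) + 2) * Real.log 2 ≤
          ((n:ℝ) / 2 ^ Lo + 2) * Real.log 2 := by
        apply mul_le_mul_of_nonneg_right _ hlog2
        linarith
      linarith
    gcongr
  have hstep2 : (2 * Real.log D + ((n:ℝ) / 2 ^ Lo + 2) * Real.log 2) / n =
      (2 * Real.log D + 2 * Real.log 2) / n + Real.log 2 / 2 ^ Lo := by
    field_simp
    ring
  have hlast : Real.log 2 / 2 ^ Lo < ε / 2 := by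
    rw [div_lt_iff₀ hpowpos]
    have h2 : 2 * Real.log 2 < 2 ^ Lo * ε := (div_lt_iff₀ hε).1 hLo
    linarith
  have hN := hN₀ n hnN
  calc Real.log (complexityOf (SAdicLevel m τ 0) n) / n ≤
      (2 * Real.log D + ((n:ℝ) / 2 ^ Lo + 2) * Real.log 2) / n := hstep1
  _ = (2 * Real.log D + 2 * Real.log 2) / n + Real.log 2 / 2 ^ Lo := hstep2
  _ < ε / 2 + ε / 2 := by exact add_lt_add hN hlast
  _ = ε := by ring


end AsympSOE
end
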